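/- Let M be a connected simple matroid of rank 3 on a finite ground set E with rank function r, and let A ⊆ E. Then M is 2-decomposable by the hyperplane (A,2)_= if and only if the following three conditions hold: (1) |E \ A| ≥ 2; (2) r(A) = 3; (3) every facet-defining flat F of rank 2 of M satisfies |A ∩ F| ≤ 1, or F ⊆ A, or A ∪ F = E. -/

import Mathlib

open Set Matroid

namespace PaperWMO

variable {α : Type*}

/-- The rank of a set `X` in a matroid `M`: the size of a largest independent subset of `X`. -/
noncomputable def rk (M : Matroid α) (X : Set α) : ℕ :=
  sSup {n : ℕ | ∃ I, M.Indep I ∧ I ⊆ X ∧ I.ncard = n}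

/-- Contraction of the set `C` in the matroid `M`, defined by duality:
`M / C = (M✶ \ C)✶`, where deletion is restriction to the complement. -/
noncomputable def contract (M : Matroid α) (C : Set α) : Matroid α :=
  (M✶ ↾ (M.E \ C))✶

/-- A matroid is connected if its ground set is nonempty and it is not the direct sum of
two matroids on nonempty disjoint ground sets. -/
def Conn (M : Matroid α) : Prop :=
  M.E.Nonempty ∧ ¬ ∃ (M₁ M₂ : Matroid α) (h : Disjoint M₁.E M₂.E),
    M₁.E.Nonempty ∧ M₂.E.Nonempty ∧ M = Matroid.disjointSum M₁ M₂ h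

/-- A flat of `M`: a subset `F` of the ground set such that any superset
`B` with `F ⊆ B ⊆ M.E` of the same rank equals `F`. -/
def IsFlat (M : Matroid α) (F : Set α) : Prop :=
  F ⊆ M.E ∧ ∀ B : Set α, F ⊆ B → B ⊆ M.E → rk M B = rk M F → B = F

/-- A matroid is simple if every subset of the ground set with at most two elements
is independent. -/
def IsSimple (M : Matroid α) : Prop :=
  ∀ X ⊆ M.E, X.ncard ≤ 2 → M.Indep X

/-- A facet-defining flat of rank 2: a flat `F` of rank 2 such that
both the restriction `M ↾ F` and the contraction `M / F` are connected. -/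
def FacetFlat2 (M : Matroid α) (F : Set α) : Prop :=
  IsFlat M F ∧ rk M F = 2 ∧ Conn (M ↾ F) ∧ Conn (contract M F)

/-- `M` is 2-decomposable by the hyperplane `(A, a)_=`. -/
def TwoDecomposableBy (M : Matroid α) (A : Set α) (a : ℕ) : Prop :=
  (∃ N₁ : Matroid α, N₁.E = M.E ∧
      ∀ B : Set α, N₁.IsBase B ↔ M.IsBase B ∧ (B ∩ A).ncard ≤ a) ∧
  (∃ N₂ : Matroid α, N₂.E = M.E ∧
      ∀ B : Set α, N₂.IsBase B ↔ M.IsBase B ∧ a ≤ (B ∩ A).ncard) ∧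
  (∃ B : Set α, M.IsBase B ∧ a < (B ∩ A).ncard) ∧
  (∃ B : Set α, M.IsBase B ∧ (B ∩ A).ncard < a)

/-- A 3-partition in `M`: a partition of the ground set into three parts, each of size
at least two, such that no facet-defining flat of rank 2 meets all three parts, and the
union of any two parts has rank 3. -/
def ThreePartition (M : Matroid α) (A₁ A₂ A₃ : Set α) : Prop :=
  A₁ ∪ A₂ ∪ A₃ = M.E ∧
  Disjoint A₁ A₂ ∧ Disjoint A₂ A₃ ∧ Disjoint A₁ A₃ ∧
  2 ≤ A₁.ncard ∧ 2 ≤ A₂.ncard ∧ 2 ≤ A₃.ncard ∧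
  (¬ ∃ F : Set α, FacetFlat2 M F ∧
      (F ∩ A₁).Nonempty ∧ (F ∩ A₂).Nonempty ∧ (F ∩ A₃).Nonempty) ∧
  rk M (A₁ ∪ A₂) = 3 ∧ rk M (A₂ ∪ A₃) = 3 ∧ rk M (A₃ ∪ A₁) = 3

/-- The adjacency relation of the graph `g(A, B)` (with respect to the matroid `M`):
the vertex set is `B`, and distinct `x, y ∈ B` are adjacent iff some facet-defining flat
of rank 2 of `M` contains both `x` and `y` and meets `A`. -/
def gAdj (M : Matroid α) (A B : Set α) (x y : α) : Prop :=
  x ∈ B ∧ y ∈ B ∧ x ≠ y ∧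
    ∃ F : Set α, FacetFlat2 M F ∧ x ∈ F ∧ y ∈ F ∧ (F ∩ A).Nonempty

/-- `C` is the vertex set of a connected component of the graph `g(S, V)`. -/
def IsGComponent (M : Matroid α) (S V C : Set α) : Prop :=
  ∃ x ∈ V, C = {y | y ∈ V ∧ Relation.ReflTransGen (gAdj M S V) x y}

variable {M : Matroid α} {X Y I J B F L : Set α} {e f x y : α}

lemma rk_bdd (hfin : M.E.Finite) (X : Set α) :
    BddAbove {n : ℕ | ∃ I, M.Indep I ∧ I ⊆ X ∧ I.ncard = n} :=
  ⟨M.E.ncard, fun _ ⟨I, hI, _, hn⟩ => hn ▸ Set.ncard_le_ncard hI.subset_ground hfin⟩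

lemma le_rk (hfin : M.E.Finite) (hI : M.Indep I) (hIX : I ⊆ X) : I.ncard ≤ rk M X :=
  le_csSup (rk_bdd hfin X) ⟨I, hI, hIX, rfl⟩

lemma exists_rk (hfin : M.E.Finite) (X : Set α) :
    ∃ I, M.Indep I ∧ I ⊆ X ∧ I.ncard = rk M X :=
  Nat.sSup_mem (⟨0, ∅, M.empty_indep, empty_subset _, by simp⟩ :
    {n : ℕ | ∃ I, M.Indep I ∧ I ⊆ X ∧ I.ncard = n}.Nonempty) (rk_bdd hfin X)

lemma rk_mono (hfin : M.E.Finite) (hXY : X ⊆ Y) : rk M X ≤ rk M Y := by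
  obtain ⟨I, hI, hIX, hcard⟩ := exists_rk hfin X
  exact hcard ▸ le_rk hfin hI (hIX.trans hXY)

lemma basis_ncard (hfin : M.E.Finite) (hJ : M.IsBasis J X) : J.ncard = rk M X := by
  refine le_antisymm (le_rk hfin hJ.indep hJ.subset) ?_
  obtain ⟨I, hI, hIX, hcard⟩ := exists_rk hfin X
  rw [← hcard]
  by_contra hlt
  push_neg at hlt
  have hJf : J.Finite := hfin.subset hJ.indep.subset_ground
  have hIf : I.Finite := hfin.subset hI.subset_ground
  obtain ⟨e, he, hind⟩ := hJ.indep.augment hI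
    (by rw [← hJf.cast_ncard_eq, ← hIf.cast_ncard_eq]; exact_mod_cast hlt)
  have := hJ.eq_of_subset_indep hind (subset_insert _ _)
    (insert_subset (hIX he.1) hJ.subset)
  exact he.2 (this ▸ mem_insert e J)

lemma indep_ncard_le (hfin : M.E.Finite) (hrank : rk M M.E = 3) (hI : M.Indep I) :
    I.ncard ≤ 3 := hrank ▸ le_rk hfin hI hI.subset_ground

lemma base_of_indep_ncard (hfin : M.E.Finite) (hrank : rk M M.E = 3)
    (hI : M.Indep B) (h3 : B.ncard = 3) : M.IsBase B := by
  rw [isBase_iff_maximal_indep]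
  refine ⟨hI, fun I hind hBI => ?_⟩
  rw [Set.eq_of_subset_of_ncard_le hBI
    (by rw [h3]; exact indep_ncard_le hfin hrank hind) (hfin.subset hind.subset_ground)]

lemma base_ncard (hfin : M.E.Finite) (hrank : rk M M.E = 3) (hB : M.IsBase B) :
    B.ncard = 3 := by
  rw [basis_ncard hfin hB.isBasis_ground, hrank]

lemma rk_closure_eq (hfin : M.E.Finite) (hX : X ⊆ M.E) :
    rk M (M.closure X) = rk M X := by
  obtain ⟨J, hJ⟩ := M.exists_isBasis X hX
  rw [← basis_ncard hfin hJ, ← basis_ncard hfin hJ.isBasis_closure_right]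


/-- upper bound on rk by a covering set's cardinality -/
lemma rk_le_of_forall (hfin : M.E.Finite) {n : ℕ}
    (h : ∀ I, M.Indep I → I ⊆ X → I.ncard ≤ n) : rk M X ≤ n := by
  obtain ⟨I, hI, hIX, hcard⟩ := exists_rk hfin X
  exact hcard ▸ h I hI hIX

lemma IsSimple.indep_singleton (hs : IsSimple M) (hx : x ∈ M.E) : M.Indep {x} :=
  hs _ (singleton_subset_iff.2 hx) (by simp)

lemma IsSimple.indep_pair (hs : IsSimple M) (hx : x ∈ M.E) (hy : y ∈ M.E) :
    M.Indep {x, y} :=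
  hs _ (insert_subset hx (singleton_subset_iff.2 hy)) ((Set.ncard_insert_le _ _).trans (by simp))

lemma rk_pair (hfin : M.E.Finite) (hs : IsSimple M) (hx : x ∈ M.E) (hy : y ∈ M.E)
    (hne : x ≠ y) : rk M {x, y} = 2 := by
  refine le_antisymm (rk_le_of_forall hfin fun I hI hIX => ?_) ?_
  · exact (Set.ncard_le_ncard hIX (toFinite _)).trans (by rw [Set.ncard_pair hne]
)
  · have := le_rk hfin (hs.indep_pair hx hy) (subset_refl _)
    rwa [Set.ncard_pair hne] at this

lemma IsSimple.closure_singleton (hs : IsSimple M) (hx : x ∈ M.E) :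
    M.closure {x} = {x} := by
  refine subset_antisymm (fun y hy => ?_) (M.subset_closure _ (by simpa))
  by_contra hne
  have hyE : y ∈ M.E := mem_ground_of_mem_closure hy
  have hind : M.Indep {y, x} := hs.indep_pair hyE hx
  have h2 := hind.notMem_closure_diff_of_mem (mem_insert _ _)
  have h3 : ({y, x} : Set α) \ {y} = {x} := by
    ext z
    simp only [mem_diff, mem_insert_iff, mem_singleton_iff]
    constructor
    · rintro ⟨(rfl | rfl), hz⟩
      · exact absurd rfl hz
      · rfl
    · rintro rfl
      exact ⟨Or.inr rfl, fun h => hne (by simpa using h.symm)⟩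
  rw [h3] at h2
  exact h2 hy

/-- a rank-2 flat containing an independent pair is the closure of that pair -/
lemma line_eq_closure_pair (hfin : M.E.Finite) (hL : M.IsFlat L) (hrk : rk M L = 2)
    (hind : M.Indep {x, y}) (hx : x ∈ L) (hy : y ∈ L) (hne : x ≠ y) :
    M.closure {x, y} = L := by
  refine subset_antisymm ?_ fun f hf => ?_
  · have h1 := M.closure_subset_closure (insert_subset hx (singleton_subset_iff.2 hy))
    rwa [hL.closure] at h1
  · by_contra hfcl
    have hfE : f ∈ M.E := hL.subset_ground hf
    have hfp : f ∉ ({x, y} : Set α) :=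
      fun h => hfcl (M.subset_closure _ hind.subset_ground h)
    have hind3 : M.Indep (insert f {x, y}) :=
      (hind.insert_indep_iff_of_notMem hfp).2 ⟨hfE, hfcl⟩
    have hcard : (insert f ({x, y} : Set α)).ncard = 3 := by
      rw [Set.ncard_insert_of_notMem hfp (toFinite _), Set.ncard_pair hne]
    have := le_rk hfin hind3 (insert_subset hf (insert_subset hx (singleton_subset_iff.2 hy)))
    rw [hcard, hrk] at this
    omega

lemma rk_closure_pair (hfin : M.E.Finite) (hs : IsSimple M) (hx : x ∈ M.E) (hy : y ∈ M.E)
    (hne : x ≠ y) : rk M (M.closure {x, y}) = 2 := by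
  rw [rk_closure_eq hfin (insert_subset hx (singleton_subset_iff.2 hy)),
    rk_pair hfin hs hx hy hne]

lemma flat_closure (M : Matroid α) (X : Set α) : M.IsFlat (M.closure X) := by
  refine ⟨fun I Y hI hIY => ?_, M.closure_subset_ground X⟩
  have h1 : Y ⊆ M.closure I := hIY.subset_closure
  have h2 : M.closure I = M.closure X := by
    rw [hI.closure_eq_closure, closure_closure]
  exact h1.trans_eq h2

lemma isFlat_iff_flat (hfin : M.E.Finite) (hFE : F ⊆ M.E) :
    IsFlat M F ↔ M.IsFlat F := by
  constructor
  · rintro ⟨-, hmax⟩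
    have h1 : M.closure F = F :=
      hmax (M.closure F) (M.subset_closure F hFE) (M.closure_subset_ground F)
        (rk_closure_eq hfin hFE)
    exact h1 ▸ flat_closure M F
  · intro hF
    refine ⟨hFE, fun B hFB hBE hrkeq => ?_⟩
    obtain ⟨J, hJ⟩ := M.exists_isBasis F hFE
    obtain ⟨J', hJ', hJJ'⟩ := hJ.indep.subset_isBasis_of_subset (hJ.subset.trans hFB) hBE
    have hcard : J = J' := Set.eq_of_subset_of_ncard_le hJJ'
      (by rw [basis_ncard hfin hJ, basis_ncard hfin hJ', hrkeq])
      (hfin.subset hJ'.indep.subset_ground)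
    have hBsub : B ⊆ M.closure J := hcard ▸ hJ'.subset_closure
    have : M.closure J ⊆ F := by
      rw [hJ.closure_eq_closure, hF.closure]
    exact subset_antisymm (hBsub.trans this) hFB


lemma contract_ground (M : Matroid α) (C : Set α) : (contract M C).E = M.E \ C := rfl

lemma contract_base_iff (hfin : M.E.Finite) (hrank : rk M M.E = 3)
    (hL : M.IsFlat L) (hrk2 : rk M L = 2) {B : Set α} :
    (contract M L).IsBase B ↔ ∃ e ∈ M.E \ L, B = {e} := by
  set D := M.E \ L with hD
  have hDE : D ⊆ M✶.E := diff_subset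
  have hs2 : ¬ M✶.Indep D := by
    intro h
    obtain ⟨B₀, hB₀, hdisj⟩ := (dual_indep_iff_exists (M := M) hDE).1 h
    have hB₀L : B₀ ⊆ L := fun x hx => by
      have hxE : x ∈ M.E := hB₀.subset_ground hx
      by_contra hxL
      exact (disjoint_right.1 hdisj hx) ⟨hxE, hxL⟩
    have := le_rk hfin hB₀.indep hB₀L
    rw [base_ncard hfin hrank hB₀, hrk2] at this
    omega
  have hs3 : ∀ e ∈ D, M✶.Indep (D \ {e}) := by
    intro e he
    obtain ⟨J, hJ⟩ := M.exists_isBasis L hL.subset_ground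
    have hJcard : J.ncard = 2 := by rw [basis_ncard hfin hJ, hrk2]
    have heJ : e ∉ J := fun h => he.2 (hJ.subset h)
    have hecl : e ∉ M.closure J := by
      rw [hJ.closure_eq_closure, hL.closure]; exact he.2
    have hind : M.Indep (insert e J) :=
      (hJ.indep.insert_indep_iff_of_notMem heJ).2 ⟨he.1, hecl⟩
    have hB₀ : M.IsBase (insert e J) := base_of_indep_ncard hfin hrank hind
      (by rw [Set.ncard_insert_of_notMem heJ (hfin.subset hJ.indep.subset_ground), hJcard])
    refine (dual_indep_iff_exists (M := M) (diff_subset.trans hDE)).2 ⟨_, hB₀, ?_⟩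
    rw [disjoint_left]
    rintro x ⟨hxD, hxe⟩ hxB
    rcases hxB with rfl | hxJ
    · exact hxe rfl
    · exact hxD.2 (hJ.subset hxJ)
  constructor
  · intro hB
    obtain ⟨hB1, hB2⟩ := dual_isBase_iff'.1 hB
    rw [show (M✶ ↾ D).E = D from rfl] at hB1 hB2
    have hbasis : M✶.IsBasis' (D \ B) D := isBase_restrict_iff'.1 hB1
    obtain ⟨⟨hind, -⟩, hmax⟩ := hbasis
    obtain ⟨e, heB⟩ : B.Nonempty := by
      rw [nonempty_iff_ne_empty]
      rintro rfl
      rw [diff_empty] at hind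
      exact hs2 hind
    refine ⟨e, hB2 heB, ?_⟩
    refine subset_antisymm (fun f hf => ?_) (by simpa using heB)
    by_contra hfe
    have hsub : D \ {e} ⊆ D \ B := hmax ⟨hs3 e (hB2 heB), diff_subset⟩
      (diff_subset_diff_right (by simpa using heB))
    have : f ∈ D \ {e} := ⟨hB2 hf, by simpa using hfe⟩
    exact (hsub this).2 hf
  · rintro ⟨e, he, rfl⟩
    show (M✶ ↾ D)✶.IsBase {e}
    rw [dual_isBase_iff', show (M✶ ↾ D).E = D from rfl]
    refine ⟨isBase_restrict_iff'.2 ⟨⟨hs3 e he, diff_subset⟩, fun Y hY hsub => ?_⟩,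
      by simpa using he⟩
    rintro x hxY
    refine ⟨hY.2 hxY, fun hxe => ?_⟩
    rw [mem_singleton_iff] at hxe
    have hxY' : e ∈ Y := hxe ▸ hxY
    have hYD : Y = D := subset_antisymm hY.2 fun z hz => by
      by_cases hze : z = e
      · exact hze ▸ hxY'
      · exact hsub ⟨hz, by simpa using hze⟩
    rw [hYD] at hY
    exact hs2 hY.1

lemma contract_indep_singleton (hfin : M.E.Finite) (hrank : rk M M.E = 3)
    (hL : M.IsFlat L) (hrk2 : rk M L = 2) (he : e ∈ M.E \ L) :
    (contract M L).Indep {e} :=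
  ((contract_base_iff hfin hrank hL hrk2).2 ⟨e, he, rfl⟩).indep

lemma contract_not_indep_pair (hfin : M.E.Finite) (hrank : rk M M.E = 3)
    (hL : M.IsFlat L) (hrk2 : rk M L = 2) (hne : e ≠ f) :
    ¬ (contract M L).Indep {e, f} := by
  intro h
  obtain ⟨B, hB, hsub⟩ := indep_iff.1 h
  obtain ⟨g, -, rfl⟩ := (contract_base_iff hfin hrank hL hrk2).1 hB
  have h1 : e = g := hsub (mem_insert _ _)
  have h2 : f = g := hsub (mem_insert_of_mem _ rfl)
  exact hne (h1.trans h2.symm)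

lemma facetFlat2_of_line (hfin : M.E.Finite) (hs : IsSimple M) (hrank : rk M M.E = 3)
    (hL : M.IsFlat L) (hrk2 : rk M L = 2) (hcard : 3 ≤ L.ncard) : FacetFlat2 M L := by
  have hLE := hL.subset_ground
  have hLfin : L.Finite := hfin.subset hLE
  refine ⟨(isFlat_iff_flat hfin hLE).2 hL, hrk2, ⟨?_, ?_⟩, ⟨?_, ?_⟩⟩
  · rw [restrict_ground_eq]
    exact nonempty_of_ncard_ne_zero (by omega)
  · rintro ⟨M₁, M₂, hdisj, hne1, hne2, heq⟩
    have hground : L = M₁.E ∪ M₂.E := by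
      have := congrArg Matroid.E heq
      rwa [restrict_ground_eq, disjointSum_ground_eq] at this
    have hE1L : M₁.E ⊆ L := hground ▸ subset_union_left
    have hE2L : M₂.E ⊆ L := hground ▸ subset_union_right
    have hsplit : ∀ I, I ⊆ L →
        ((M ↾ L).Indep I ↔ (M ↾ L).Indep (I ∩ M₁.E) ∧ (M ↾ L).Indep (I ∩ M₂.E)) := by
      intro I hIL
      rw [heq, disjointSum_indep_iff, disjointSum_indep_iff, disjointSum_indep_iff]
      have e11 : I ∩ M₁.E ∩ M₁.E = I ∩ M₁.E := by rw [inter_assoc, inter_self]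
      have e12 : I ∩ M₁.E ∩ M₂.E = ∅ := by
        rw [inter_assoc, hdisj.inter_eq, inter_empty]
      have e21 : I ∩ M₂.E ∩ M₁.E = ∅ := by
        rw [inter_assoc, hdisj.symm.inter_eq, inter_empty]
      have e22 : I ∩ M₂.E ∩ M₂.E = I ∩ M₂.E := by rw [inter_assoc, inter_self]
      rw [e11, e12, e21, e22]
      constructor
      · rintro ⟨h1, h2, h3⟩
        exact ⟨⟨h1, M₂.empty_indep, inter_subset_left.trans h3⟩,
          ⟨M₁.empty_indep, h2, inter_subset_left.trans h3⟩⟩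
      · rintro ⟨⟨h1, -, -⟩, ⟨-, h2, -⟩⟩
        exact ⟨h1, h2, hground ▸ hIL⟩
    have main : ∀ E₁ E₂ : Set α, E₁ ⊆ L → E₂ ⊆ L → Disjoint E₁ E₂ →
        (∀ I, I ⊆ L → ((M ↾ L).Indep I ↔ (M ↾ L).Indep (I ∩ E₁) ∧ (M ↾ L).Indep (I ∩ E₂))) →
        ∀ x y z : α, x ∈ E₁ → y ∈ E₁ → z ∈ E₂ → x ≠ y → False := by
      intro E₁ E₂ hE1 hE2 hd hsp x y z hx hy hz hxy
      have hzx : z ≠ x := fun h => disjoint_left.1 hd (h ▸ hx) hz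
      have hzy : z ≠ y := fun h => disjoint_left.1 hd (h ▸ hy) hz
      have hsubL : ({x, y, z} : Set α) ⊆ L :=
        insert_subset (hE1 hx) (insert_subset (hE1 hy) (singleton_subset_iff.2 (hE2 hz)))
      have hint1 : ({x, y, z} : Set α) ∩ E₁ = {x, y} := by
        ext w
        simp only [mem_inter_iff, mem_insert_iff, mem_singleton_iff]
        constructor
        · rintro ⟨(rfl | rfl | rfl), hw⟩
          · exact Or.inl rfl
          · exact Or.inr rfl
          · exact absurd hw (disjoint_right.1 hd hz)
        · rintro (rfl | rfl)
          · exact ⟨Or.inl rfl, hx⟩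
          · exact ⟨Or.inr (Or.inl rfl), hy⟩
      have hint2 : ({x, y, z} : Set α) ∩ E₂ = {z} := by
        ext w
        simp only [mem_inter_iff, mem_insert_iff, mem_singleton_iff]
        constructor
        · rintro ⟨(rfl | rfl | rfl), hw⟩
          · exact absurd hw (disjoint_left.1 hd hx)
          · exact absurd hw (disjoint_left.1 hd hy)
          · exact rfl
        · rintro rfl
          exact ⟨Or.inr (Or.inr rfl), hz⟩
      have hi3 : (M ↾ L).Indep {x, y, z} := by
        rw [hsp _ hsubL, hint1, hint2]
        refine ⟨restrict_indep_iff.2 ⟨hs.indep_pair (hLE (hE1 hx)) (hLE (hE1 hy)), ?_⟩,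
          restrict_indep_iff.2 ⟨hs.indep_singleton (hLE (hE2 hz)), by simpa using hE2 hz⟩⟩
        exact insert_subset (hE1 hx) (singleton_subset_iff.2 (hE1 hy))
      rw [restrict_indep_iff] at hi3
      have hc3 : ({x, y, z} : Set α).ncard = 3 := by
        rw [Set.ncard_insert_of_notMem (by simp [hxy, hzx.symm]) (toFinite _),
          Set.ncard_pair hzy.symm]
      have := le_rk hfin hi3.1 hi3.2
      rw [hc3, hrk2] at this
      omega
    have hcard2 : 2 ≤ M₁.E.ncard ∨ 2 ≤ M₂.E.ncard := by
      have h1 := Set.ncard_union_le M₁.E M₂.E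
      rw [← hground] at h1
      omega
    rcases hcard2 with h | h
    · obtain ⟨x, hx, y, hy, hxy⟩ := (Set.one_lt_ncard (hfin.subset (hE1L.trans hLE))).1 (by omega)
      obtain ⟨z, hz⟩ := hne2
      exact main M₁.E M₂.E hE1L hE2L hdisj hsplit x y z hx hy hz hxy
    · obtain ⟨x, hx, y, hy, hxy⟩ := (Set.one_lt_ncard (hfin.subset (hE2L.trans hLE))).1 (by omega)
      obtain ⟨z, hz⟩ := hne1
      refine main M₂.E M₁.E hE2L hE1L hdisj.symm (fun I hIL => (hsplit I hIL).trans and_comm)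
        x y z hx hy hz hxy
  · rw [contract_ground]
    rw [nonempty_iff_ne_empty]
    intro hempty
    have hEL : M.E ⊆ L := by rwa [diff_eq_empty] at hempty
    have := rk_mono (M := M) hfin hEL
    rw [hrank, hrk2] at this
    omega
  · rintro ⟨M₁, M₂, hdisj, hne1, hne2, heq⟩
    have hground : M.E \ L = M₁.E ∪ M₂.E := by
      have := congrArg Matroid.E heq
      rwa [contract_ground, disjointSum_ground_eq] at this
    have hE1D : M₁.E ⊆ M.E \ L := hground ▸ subset_union_left
    have hE2D : M₂.E ⊆ M.E \ L := hground ▸ subset_union_right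
    obtain ⟨e₁, he₁⟩ := hne1
    obtain ⟨e₂, he₂⟩ := hne2
    have hne : e₁ ≠ e₂ := fun h => disjoint_left.1 hdisj he₁ (h ▸ he₂)
    have hint1 : ({e₁, e₂} : Set α) ∩ M₁.E = {e₁} := by
      ext w
      simp only [mem_inter_iff, mem_insert_iff, mem_singleton_iff]
      constructor
      · rintro ⟨(rfl | rfl), hw⟩
        · exact rfl
        · exact absurd hw (disjoint_right.1 hdisj he₂)
      · rintro rfl
        exact ⟨Or.inl rfl, he₁⟩
    have hint2 : ({e₁, e₂} : Set α) ∩ M₂.E = {e₂} := by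
      ext w
      simp only [mem_inter_iff, mem_insert_iff, mem_singleton_iff]
      constructor
      · rintro ⟨(rfl | rfl), hw⟩
        · exact absurd hw (disjoint_left.1 hdisj he₁)
        · exact rfl
      · rintro rfl
        exact ⟨Or.inr rfl, he₂⟩
    have h1 : (contract M L).Indep {e₁} :=
      contract_indep_singleton hfin hrank hL hrk2 (hE1D he₁)
    have h2 : (contract M L).Indep {e₂} :=
      contract_indep_singleton hfin hrank hL hrk2 (hE2D he₂)
    have hpair : (contract M L).Indep {e₁, e₂} := by
      rw [heq, disjointSum_indep_iff] at h1 h2 ⊢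
      rw [hint1, hint2]
      have k1 : ({e₁} : Set α) ∩ M₁.E = {e₁} := by
        rw [inter_eq_self_of_subset_left (singleton_subset_iff.2 he₁)]
      have k2 : ({e₂} : Set α) ∩ M₂.E = {e₂} := by
        rw [inter_eq_self_of_subset_left (singleton_subset_iff.2 he₂)]
      rw [k1] at h1
      rw [k2] at h2
      exact ⟨h1.1, h2.2.1, insert_subset (Or.inl he₁) (singleton_subset_iff.2 (Or.inr he₂))⟩
    exact contract_not_indep_pair hfin hrank hL hrk2 hne hpair


variable {A : Set α}

lemma ext_N2 (hfin : M.E.Finite) (hrank : rk M M.E = 3) (hA : A ⊆ M.E) (h2 : rk M A = 3)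
    (hI : M.Indep I) (hIA : (I \ A).ncard ≤ 1) :
    ∃ B, M.IsBase B ∧ I ⊆ B ∧ (B \ A).ncard ≤ 1 := by
  have hAIE : A ∪ I ⊆ M.E := union_subset hA hI.subset_ground
  have hrkAI : rk M (A ∪ I) = 3 := le_antisymm
    (by rw [← hrank]; exact rk_mono hfin hAIE)
    (by rw [← h2]; exact rk_mono hfin subset_union_left)
  obtain ⟨J, hJ, hIJ⟩ := hI.subset_isBasis_of_subset subset_union_right hAIE
  have hJcard : J.ncard = 3 := by rw [basis_ncard hfin hJ, hrkAI]
  refine ⟨J, base_of_indep_ncard hfin hrank hJ.indep hJcard, hIJ,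
    le_trans (Set.ncard_le_ncard ?_ (hfin.subset (diff_subset.trans hI.subset_ground))) hIA⟩
  rintro x ⟨hxJ, hxA⟩
  rcases hJ.subset hxJ with hxA' | hxI
  · exact absurd hxA' hxA
  · exact ⟨hxI, hxA⟩

lemma exists_N2 (hfin : M.E.Finite) (hsimple : IsSimple M) (hrank : rk M M.E = 3)
    (hA : A ⊆ M.E) (h2 : rk M A = 3)
    (hstar : ∀ L, M.IsFlat L → rk M L = 2 → 3 ≤ L.ncard →
      (A ∩ L).ncard ≤ 1 ∨ L ⊆ A ∨ A ∪ L = M.E) :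
    ∃ N : Matroid α, N.E = M.E ∧ ∀ B, N.IsBase B ↔ M.IsBase B ∧ 2 ≤ (B ∩ A).ncard := by
  set Ind : Set α → Prop := fun I => M.Indep I ∧ (I \ A).ncard ≤ 1 with hInddef
  have haug : ∀ ⦃I J⦄, Ind I → Ind J → I.ncard < J.ncard →
      ∃ e ∈ J, e ∉ I ∧ Ind (insert e I) := by
    rintro I J ⟨hIi, hIA⟩ ⟨hJi, hJA⟩ hlt
    have hIfin : I.Finite := hfin.subset hIi.subset_ground
    have hJfin : J.Finite := hfin.subset hJi.subset_ground
    by_cases hI0 : (I \ A).ncard = 0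
    · obtain ⟨e, he, hind⟩ := hIi.augment hJi
        (by rw [← hIfin.cast_ncard_eq, ← hJfin.cast_ncard_eq]; exact_mod_cast hlt)
      refine ⟨e, he.1, he.2, hind, ?_⟩
      have hsub : insert e I \ A ⊆ insert e (I \ A) := by
        rintro x ⟨hx, hxA⟩
        rcases hx with rfl | hx
        · exact mem_insert _ _
        · exact mem_insert_of_mem _ ⟨hx, hxA⟩
      have := (Set.ncard_le_ncard hsub ((hIfin.diff (t := A)).insert _)).trans
        (Set.ncard_insert_le _ _)
      omega
    · have hIA1 : (I \ A).ncard = 1 := by omega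
      set J' := J ∩ A with hJ'def
      have hJ'i : M.Indep J' := hJi.subset inter_subset_left
      have hJ'fin : J'.Finite := hJfin.subset inter_subset_left
      by_cases hlt' : I.ncard < J'.ncard
      · obtain ⟨e, he, hind⟩ := hIi.augment hJ'i
          (by rw [← hIfin.cast_ncard_eq, ← hJ'fin.cast_ncard_eq]; exact_mod_cast hlt')
        have heA : e ∈ A := inter_subset_right he.1
        refine ⟨e, inter_subset_left he.1, he.2, hind, ?_⟩
        have heq : insert e I \ A = I \ A := by
          ext x
          simp only [mem_diff, mem_insert_iff]
          constructor
          · rintro ⟨(rfl | hx), hxA⟩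
            · exact absurd heA hxA
            · exact ⟨hx, hxA⟩
          · rintro ⟨hx, hxA⟩
            exact ⟨Or.inr hx, hxA⟩
        rw [heq]
        omega
      · push_neg at hlt'
        have hJsplit := Set.ncard_inter_add_ncard_diff_eq_ncard J A hJfin
        rw [← hJ'def] at hJsplit
        have hJle : J.ncard ≤ 3 := indep_ncard_le hfin hrank hJi
        have hIpos : 1 ≤ I.ncard := by
          have := Set.ncard_le_ncard (diff_subset (s := I) (t := A)) hIfin
          omega
        obtain ⟨e, heI⟩ := Set.ncard_eq_one.1 hIA1
        have heIA : e ∈ I \ A := heI ▸ rfl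
        by_cases hI1 : I.ncard = 1
        · have hIe : I = {e} := (Set.eq_of_subset_of_ncard_le
            (singleton_subset_iff.2 heIA.1) (by rw [Set.ncard_singleton]; omega) hIfin).symm
          obtain ⟨b, hbJ'⟩ : J'.Nonempty := by
            rw [← Set.ncard_pos hJ'fin]
            omega
          have hbA : b ∈ A := inter_subset_right hbJ'
          refine ⟨b, inter_subset_left hbJ', ?_, ?_, ?_⟩
          · intro hbI
            rw [hIe, mem_singleton_iff] at hbI
            exact heIA.2 (hbI ▸ hbA)
          · rw [hIe]
            exact hsimple.indep_pair (hA hbA) (hIi.subset_ground (hIe ▸ rfl))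
          · have heq : insert b I \ A = I \ A := by
              ext x
              simp only [mem_diff, mem_insert_iff]
              constructor
              · rintro ⟨(rfl | hx), hxA⟩
                · exact absurd hbA hxA
                · exact ⟨hx, hxA⟩
              · rintro ⟨hx, hxA⟩
                exact ⟨Or.inr hx, hxA⟩
            rw [heq]
            omega
        · have hI2 : I.ncard = 2 := by
            have : I.ncard < J.ncard := hlt
            omega
          set L := M.closure I with hLdef
          have hIE : I ⊆ M.E := hIi.subset_ground
          have hIL : I ⊆ L := M.subset_closure I hIE
          have hrkL : rk M L = 2 := by
            rw [hLdef, rk_closure_eq hfin hIE, ← basis_ncard hfin hIi.isBasis_self, hI2]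
          by_cases hex : ∃ x ∈ J', x ∉ I ∧ M.Indep (insert x I)
          · obtain ⟨x, hxJ', hxI, hind⟩ := hex
            have hxA : x ∈ A := inter_subset_right hxJ'
            refine ⟨x, inter_subset_left hxJ', hxI, hind, ?_⟩
            have heq : insert x I \ A = I \ A := by
              ext z
              simp only [mem_diff, mem_insert_iff]
              constructor
              · rintro ⟨(rfl | hz), hzA⟩
                · exact absurd hxA hzA
                · exact ⟨hz, hzA⟩
              · rintro ⟨hz, hzA⟩
                exact ⟨Or.inr hz, hzA⟩
            rw [heq]
            omega
          · exfalso
            push_neg at hex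
            have hJ'L : J' ⊆ L := by
              intro x hxJ'
              by_cases hxI : x ∈ I
              · exact hIL hxI
              · have hxE : x ∈ M.E := hJi.subset_ground (inter_subset_left hxJ')
                have := hex x hxJ' hxI
                rw [hIi.insert_indep_iff_of_notMem hxI] at this
                simpa [hxE] using this
            obtain ⟨x, hxJ', hxI⟩ : ∃ x ∈ J', x ∉ I := by
              by_contra hcon
              push_neg at hcon
              have hsub : J' ⊆ I ∩ A := fun x hx => ⟨hcon x hx, inter_subset_right hx⟩
              have h5 := Set.ncard_le_ncard hsub (hIfin.inter_of_left A)
              have h6 := Set.ncard_inter_add_ncard_diff_eq_ncard I A hIfin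
              omega
            have hxA : x ∈ A := inter_subset_right hxJ'
            have hxL : x ∈ L := hJ'L hxJ'
            have hLcard : 3 ≤ L.ncard := by
              have hsub : insert x I ⊆ L := insert_subset hxL hIL
              have : (insert x I).ncard = 3 := by
                rw [Set.ncard_insert_of_notMem hxI hIfin, hI2]
              rw [← this]
              exact Set.ncard_le_ncard hsub (hfin.subset (M.closure_subset_ground I))
            obtain ⟨a, haI, haA⟩ : ∃ a ∈ I, a ∈ A := by
              by_contra hcon
              push_neg at hcon
              have : I ⊆ I \ A := fun z hz => ⟨hz, hcon z hz⟩
              have := Set.ncard_le_ncard this hIfin.diff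
              omega
            obtain ⟨f, hfJA⟩ := Set.ncard_eq_one.1 (show (J \ A).ncard = 1 by omega)
            have hfJ : f ∈ J \ A := hfJA ▸ rfl
            rcases hstar L (flat_closure M I) hrkL hLcard with hc | hc | hc
            · have hsub : ({a, x} : Set α) ⊆ A ∩ L :=
                insert_subset ⟨haA, hIL haI⟩ (singleton_subset_iff.2 ⟨hxA, hxL⟩)
              have := Set.ncard_le_ncard hsub
                ((hfin.subset (M.closure_subset_ground I)).inter_of_right A)
              rw [Set.ncard_pair (fun h => hxI (by rw [← h]; exact haI))] at this
              omega
            · exact heIA.2 (hc (hIL heIA.1))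
            · have hJL : J ⊆ L := by
                intro z hzJ
                by_cases hzA : z ∈ A
                · exact hJ'L ⟨hzJ, hzA⟩
                · have hzE : z ∈ M.E := hJi.subset_ground hzJ
                  have : z ∈ A ∪ L := hc ▸ hzE
                  rcases this with h | h
                  · exact absurd h hzA
                  · exact h
              have := le_rk hfin hJi hJL
              rw [hrkL] at this
              omega
  set NI := IndepMatroid.ofFinite hfin Ind ⟨M.empty_indep, by simp⟩
    (fun I J hJ hIJ => ⟨hJ.1.subset hIJ,
      le_trans (Set.ncard_le_ncard (diff_subset_diff_left hIJ)
        (hfin.subset (diff_subset.trans hJ.1.subset_ground))) hJ.2⟩)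
    haug (fun I hI => hI.1.subset_ground) with hNIdef
  refine ⟨NI.matroid, by simp [hNIdef], fun B => ?_⟩
  have hNind : ∀ I, NI.matroid.Indep I ↔ Ind I := fun I => by simp [hNIdef]
  rw [isBase_iff_maximal_indep]
  constructor
  · rintro ⟨hBi, hBmax⟩
    rw [hNind] at hBi
    obtain ⟨B', hB', hBB', hB'A⟩ := ext_N2 hfin hrank hA h2 hBi.1 hBi.2
    have hBeq : B = B' := subset_antisymm hBB'
      (hBmax ((hNind B').2 ⟨hB'.indep, hB'A⟩) hBB')
    subst hBeq
    have hBc := base_ncard hfin hrank hB'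
    have := Set.ncard_inter_add_ncard_diff_eq_ncard B A
      (hfin.subset hB'.indep.subset_ground)
    exact ⟨hB', by omega⟩
  · rintro ⟨hB, hBA⟩
    have hBfin : B.Finite := hfin.subset hB.indep.subset_ground
    have hBc := base_ncard hfin hrank hB
    have hsplit := Set.ncard_inter_add_ncard_diff_eq_ncard B A hBfin
    have hBA3 : (B ∩ A).ncard ≤ 3 := by
      have := Set.ncard_le_ncard (inter_subset_left (s := B) (t := A)) hBfin
      omega
    refine ⟨(hNind B).2 ⟨hB.indep, by omega⟩, fun Y hY hBY => ?_⟩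
    rw [hNind] at hY
    exact (hB.eq_of_subset_indep hY.1 hBY) ▸ subset_rfl


lemma ext_N1 (hfin : M.E.Finite) (hrank : rk M M.E = 3)
    (hI : M.Indep I) (hg : ¬(I ⊆ A ∧ M.E \ A ⊆ M.closure I)) :
    ∃ B, M.IsBase B ∧ I ⊆ B ∧ ¬ B ⊆ A := by
  by_cases hIA : I ⊆ A
  · have hncl : ¬ M.E \ A ⊆ M.closure I := fun h => hg ⟨hIA, h⟩
    obtain ⟨e, he, hecl⟩ := not_subset.1 hncl
    have heI : e ∉ I := fun h => he.2 (hIA h)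
    have hind : M.Indep (insert e I) :=
      (hI.insert_indep_iff_of_notMem heI).2 ⟨he.1, hecl⟩
    obtain ⟨B, hB, hsub⟩ := hind.exists_isBase_superset
    exact ⟨B, hB, (subset_insert _ _).trans hsub,
      fun h => he.2 (h (hsub (mem_insert _ _)))⟩
  · obtain ⟨B, hB, hsub⟩ := hI.exists_isBase_superset
    obtain ⟨f, hfI, hfA⟩ := not_subset.1 hIA
    exact ⟨B, hB, hsub, fun h => hfA (h (hsub hfI))⟩

lemma exists_N1 (hfin : M.E.Finite) (hsimple : IsSimple M) (hrank : rk M M.E = 3)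
    (hA : A ⊆ M.E) (h1 : 2 ≤ (M.E \ A).ncard)
    (hstar : ∀ L, M.IsFlat L → rk M L = 2 → 3 ≤ L.ncard →
      (A ∩ L).ncard ≤ 1 ∨ L ⊆ A ∨ A ∪ L = M.E) :
    ∃ N : Matroid α, N.E = M.E ∧ ∀ B, N.IsBase B ↔ M.IsBase B ∧ (B ∩ A).ncard ≤ 2 := by
  have hdiffE : M.E \ A ⊆ M.E := diff_subset
  have hdifffin : (M.E \ A).Finite := hfin.subset hdiffE
  obtain ⟨e₁, he₁, e₂, he₂, hee⟩ := (Set.one_lt_ncard hdifffin).1 (by omega)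
  set Ind : Set α → Prop :=
    fun I => M.Indep I ∧ ¬(I ⊆ A ∧ M.E \ A ⊆ M.closure I) with hInddef
  have hsubcl : ∀ ⦃I J⦄, Ind J → I ⊆ J → Ind I := by
    rintro I J ⟨hJi, hJg⟩ hIJ
    refine ⟨hJi.subset hIJ, ?_⟩
    rintro ⟨hIA, hIcl⟩
    by_cases hJA : J ⊆ A
    · exact hJg ⟨hJA, hIcl.trans (M.closure_subset_closure hIJ)⟩
    · obtain ⟨f, hfJ, hfA⟩ := not_subset.1 hJA
      have hfI : f ∉ I := fun h => hfA (hIA h)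
      have hsub : I ⊆ J \ {f} := fun x hx => ⟨hIJ hx, fun hxe => hfI (by
        rw [mem_singleton_iff] at hxe; exact hxe ▸ hx)⟩
      have : f ∈ M.closure (J \ {f}) :=
        (hIcl.trans (M.closure_subset_closure hsub)) ⟨hJi.subset_ground hfJ, hfA⟩
      exact hJi.notMem_closure_diff_of_mem hfJ this
  have haug : ∀ ⦃I J⦄, Ind I → Ind J → I.ncard < J.ncard →
      ∃ e ∈ J, e ∉ I ∧ Ind (insert e I) := by
    rintro I J ⟨hIi, hIg⟩ ⟨hJi, hJg⟩ hlt
    have hIfin : I.Finite := hfin.subset hIi.subset_ground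
    have hJfin : J.Finite := hfin.subset hJi.subset_ground
    have hJle : J.ncard ≤ 3 := indep_ncard_le hfin hrank hJi
    by_cases hIA : I ⊆ A
    swap
    · obtain ⟨e, he, hind⟩ := hIi.augment hJi
        (by rw [← hIfin.cast_ncard_eq, ← hJfin.cast_ncard_eq]; exact_mod_cast hlt)
      obtain ⟨f, hfI, hfA⟩ := not_subset.1 hIA
      exact ⟨e, he.1, he.2, hind,
        fun hb => hfA (hb.1 (mem_insert_of_mem _ hfI))⟩
    · by_cases hI0 : I.ncard = 0
      · have hIe : I = ∅ := (Set.ncard_eq_zero hIfin).1 hI0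
        obtain ⟨x, hxJ⟩ : J.Nonempty := by
          rw [← Set.ncard_pos hJfin]; omega
        have hxE : x ∈ M.E := hJi.subset_ground hxJ
        refine ⟨x, hxJ, by simp [hIe], ?_⟩
        rw [hIe, insert_empty_eq]
        refine ⟨hsimple.indep_singleton hxE, ?_⟩
        rintro ⟨hsub, hcl⟩
        rw [hsimple.closure_singleton hxE] at hcl
        have := hcl he₁
        rw [mem_singleton_iff] at this
        exact he₁.2 (hsub (this ▸ rfl))
      · by_cases hI1 : I.ncard = 1
        · obtain ⟨a, rfl⟩ := Set.ncard_eq_one.1 hI1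
          have haE : a ∈ M.E := hIi.subset_ground rfl
          have haA : a ∈ A := hIA rfl
          by_cases hex : ∃ x ∈ J, x ∉ ({a} : Set α) ∧
              ¬(insert x {a} ⊆ A ∧ M.E \ A ⊆ M.closure (insert x {a})) 
          · obtain ⟨x, hxJ, hxa, hgood⟩ := hex
            exact ⟨x, hxJ, hxa,
              hsimple.indep_pair (hJi.subset_ground hxJ) haE, hgood⟩
          · exfalso
            push_neg at hex
            set L := M.closure {e₁, e₂} with hLdef
            have hLflat : M.IsFlat L := flat_closure M _
            have hpairE : ({e₁, e₂} : Set α) ⊆ M.E :=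
              insert_subset he₁.1 (singleton_subset_iff.2 he₂.1)
            have hrkL : rk M L = 2 := rk_closure_pair hfin hsimple he₁.1 he₂.1 hee
            have hkey : ∀ x ∈ J, x ∉ ({a} : Set α) →
                x ∈ A ∧ M.closure (insert x {a}) = L := by
              intro x hxJ hxa
              obtain ⟨hsubA, hsubcl'⟩ := hex x hxJ hxa
              have hxE : x ∈ M.E := hJi.subset_ground hxJ
              have hpairind : M.Indep (insert x {a}) := hsimple.indep_pair hxE haE
              have hLx : M.closure {e₁, e₂} = M.closure (insert x {a}) := by
                refine line_eq_closure_pair hfin (flat_closure M _) ?_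
                  (hsimple.indep_pair he₁.1 he₂.1) (hsubcl' he₁) (hsubcl' he₂) hee
                rw [rk_closure_eq hfin (insert_subset hxE (singleton_subset_iff.2 haE)),
                  ← basis_ncard hfin hpairind.isBasis_self,
                  Set.ncard_insert_of_notMem hxa (toFinite _), Set.ncard_singleton]
              exact ⟨hsubA (mem_insert _ _), by rw [hLdef, hLx]⟩
            have hmemL : ∀ x ∈ J, x ∉ ({a} : Set α) → x ∈ L := by
              intro x hxJ hxa
              have h := (hkey x hxJ hxa).2
              rw [← h]
              exact M.subset_closure _
                (insert_subset (hJi.subset_ground hxJ)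
                  (singleton_subset_iff.2 haE)) (mem_insert _ _)
            obtain ⟨x₀, hx₀J, hx₀a⟩ : ∃ x ∈ J, x ∉ ({a} : Set α) := by
              by_contra hcon
              push_neg at hcon
              have := Set.ncard_le_ncard hcon hIfin
              rw [Set.ncard_singleton] at this
              omega
            have haL : a ∈ L := by
              have h := (hkey x₀ hx₀J hx₀a).2
              rw [← h]
              exact M.subset_closure _
                (insert_subset (hJi.subset_ground hx₀J)
                  (singleton_subset_iff.2 haE)) (mem_insert_of_mem _ rfl)
            have hEAL : M.E \ A ⊆ L := by
              rw [← (hkey x₀ hx₀J hx₀a).2]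
              exact (hex x₀ hx₀J hx₀a).2
            have hJL : J ⊆ L := by
              intro z hz
              by_cases hza : z ∈ ({a} : Set α)
              · rw [mem_singleton_iff] at hza
                exact hza ▸ haL
              · exact hmemL z hz hza
            have hJA : J ⊆ A := by
              intro z hz
              by_cases hza : z ∈ ({a} : Set α)
              · rw [mem_singleton_iff] at hza
                exact hza ▸ haA
              · exact (hkey z hz hza).1
            have hJ2 : J.ncard = 2 ∨ J.ncard = 3 := by omega
            rcases hJ2 with h2 | h3
            · obtain ⟨u, v, huv, rfl⟩ := Set.ncard_eq_two.1 h2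
              have hclJ : M.closure {u, v} = L :=
                line_eq_closure_pair hfin hLflat hrkL hJi
                  (hJL (mem_insert _ _)) (hJL (mem_insert_of_mem _ rfl)) huv
              exact hJg ⟨hJA, by rw [hclJ]; exact hEAL⟩
            · have := le_rk hfin hJi hJL
              rw [h3, hrkL] at this
              omega
        · have hI2 : I.ncard = 2 := by omega
          have hJ3 : J.ncard = 3 := by omega
          have hJbase : M.IsBase J := base_of_indep_ncard hfin hrank hJi hJ3
          have hJnotA : ¬ J ⊆ A := by
            intro hsub
            exact hJg ⟨hsub, by rw [hJbase.closure_eq]; exact diff_subset⟩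
          set L := M.closure I with hLdef
          have hIE : I ⊆ M.E := hIi.subset_ground
          have hIL : I ⊆ L := M.subset_closure I hIE
          have hLflat : M.IsFlat L := flat_closure M I
          have hrkL : rk M L = 2 := by
            rw [hLdef, rk_closure_eq hfin hIE, ← basis_ncard hfin hIi.isBasis_self, hI2]
          obtain ⟨e₀, he₀, he₀L⟩ : ∃ e₀ ∈ M.E \ A, e₀ ∉ L :=
            not_subset.1 (fun h => hIg ⟨hIA, h⟩)
          by_cases hex : ∃ f ∈ J, f ∉ A ∧ M.Indep (insert f I)
          · obtain ⟨f, hfJ, hfA, hind⟩ := hex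
            exact ⟨f, hfJ, fun h => hfA (hIA h), hind,
              fun hb => hfA (hb.1 (mem_insert _ _))⟩
          · exfalso
            push_neg at hex
            obtain ⟨f₀, hf₀J, hf₀A⟩ := not_subset.1 hJnotA
            have hf₀L : f₀ ∈ L := by
              have hf₀E : f₀ ∈ M.E := hJi.subset_ground hf₀J
              have hf₀I : f₀ ∉ I := fun h => hf₀A (hIA h)
              have := hex f₀ hf₀J hf₀A
              rw [hIi.insert_indep_iff_of_notMem hf₀I] at this
              simpa [hf₀E] using this
            have hLcard : 3 ≤ L.ncard := by
              have hf₀I : f₀ ∉ I := fun h => hf₀A (hIA h)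
              have hsub : insert f₀ I ⊆ L := insert_subset hf₀L hIL
              have hc : (insert f₀ I).ncard = 3 := by
                rw [Set.ncard_insert_of_notMem hf₀I hIfin, hI2]
              rw [← hc]
              exact Set.ncard_le_ncard hsub (hfin.subset (M.closure_subset_ground I))
            rcases hstar L hLflat hrkL hLcard with hc | hc | hc
            · have hsub : I ⊆ A ∩ L := fun z hz => ⟨hIA hz, hIL hz⟩
              have := Set.ncard_le_ncard hsub
                ((hfin.subset (M.closure_subset_ground I)).inter_of_right A)
              omega
            · exact hf₀A (hc hf₀L)
            · exact he₀L (by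
                rcases (hc ▸ he₀.1 : e₀ ∈ A ∪ L) with h | h
                · exact absurd h he₀.2
                · exact h)
  set NI := IndepMatroid.ofFinite hfin Ind
    ⟨M.empty_indep, by
      rintro ⟨-, hcl⟩
      have := hcl he₁
      have h2 := hsimple.indep_singleton he₁.1
      have h3 := h2.notMem_closure_diff_of_mem rfl
      rw [Set.diff_self] at h3
      exact h3 (hcl he₁)⟩
    hsubcl haug (fun I hI => hI.1.subset_ground) with hNIdef
  refine ⟨NI.matroid, by simp [hNIdef], fun B => ?_⟩
  have hNind : ∀ I, NI.matroid.Indep I ↔ Ind I := fun I => by simp [hNIdef]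
  rw [isBase_iff_maximal_indep]
  have hACard : ∀ B', M.IsBase B' → ((B' ∩ A).ncard ≤ 2 ↔ ¬ B' ⊆ A) := by
    intro B' hB'
    have hB'fin : B'.Finite := hfin.subset hB'.indep.subset_ground
    have hBc := base_ncard hfin hrank hB'
    constructor
    · intro hle hsub
      rw [inter_eq_self_of_subset_left hsub] at hle
      omega
    · intro hnsub
      by_contra hgt
      have hle3 : (B' ∩ A).ncard ≤ 3 := by
        have := Set.ncard_le_ncard (inter_subset_left (s := B') (t := A)) hB'fin
        omega
      have heq3 : (B' ∩ A).ncard = 3 := by omega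
      have : B' ∩ A = B' := Set.eq_of_subset_of_ncard_le inter_subset_left
        (by omega) hB'fin
      refine hnsub fun z hz => ?_
      have hz' : z ∈ B' ∩ A := by rw [this]; exact hz
      exact hz'.2
  constructor
  · rintro ⟨hBi, hBmax⟩
    rw [hNind] at hBi
    obtain ⟨B', hB', hBB', hB'A⟩ := ext_N1 hfin hrank hBi.1 hBi.2
    have hBeq : B = B' := subset_antisymm hBB'
      (hBmax ((hNind B').2 ⟨hB'.indep, fun hb => hB'A hb.1⟩) hBB')
    subst hBeq
    exact ⟨hB', (hACard B hB').2 hB'A⟩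
  · rintro ⟨hB, hBA⟩
    have hBnotA : ¬ B ⊆ A := (hACard B hB).1 hBA
    refine ⟨(hNind B).2 ⟨hB.indep, fun hb => hBnotA hb.1⟩, fun Y hY hBY => ?_⟩
    rw [hNind] at hY
    exact (hB.eq_of_subset_indep hY.1 hBY) ▸ subset_rfl


/-- Characterization of 2-decomposability of a connected simple rank-3 matroid by the
hyperplane `(A,2)_=`. -/
theorem twoDecomposable_iff (M : Matroid α) (hfin : M.E.Finite)
    (hconn : Conn M) (hsimple : IsSimple M) (hrank : rk M M.E = 3)
    (A : Set α) (hA : A ⊆ M.E) :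
    TwoDecomposableBy M A 2 ↔
      (2 ≤ (M.E \ A).ncard ∧ rk M A = 3 ∧
        ∀ F : Set α, FacetFlat2 M F →
          (A ∩ F).ncard ≤ 1 ∨ F ⊆ A ∨ A ∪ F = M.E) := by
  constructor
  · rintro ⟨⟨N₁, hN₁E, hN₁⟩, -, ⟨Bhi, hBhi, hBhiA⟩, ⟨Blo, hBlo, hBloA⟩⟩
    have hBhic := base_ncard hfin hrank hBhi
    have hBhifin : Bhi.Finite := hfin.subset hBhi.indep.subset_ground
    have hBhiA' : Bhi ⊆ A := by
      have h4 : (Bhi ∩ A).ncard ≤ 3 := le_trans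
        (Set.ncard_le_ncard inter_subset_left hBhifin) (by omega)
      have h5 : Bhi ∩ A = Bhi := Set.eq_of_subset_of_ncard_le inter_subset_left
        (by omega) hBhifin
      intro z hz
      have hz' : z ∈ Bhi ∩ A := by rw [h5]; exact hz
      exact hz'.2
    have h2 : rk M A = 3 := le_antisymm (by rw [← hrank]; exact rk_mono hfin hA)
      (by rw [← hBhic]; exact le_rk hfin hBhi.indep hBhiA')
    have hBloc := base_ncard hfin hrank hBlo
    have hsplitlo := Set.ncard_inter_add_ncard_diff_eq_ncard Blo A
      (hfin.subset hBlo.indep.subset_ground)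
    have h1 : 2 ≤ (M.E \ A).ncard := by
      have hsub : Blo \ A ⊆ M.E \ A := diff_subset_diff_left hBlo.indep.subset_ground
      have := Set.ncard_le_ncard hsub (hfin.subset diff_subset)
      omega
    refine ⟨h1, h2, fun F hF => ?_⟩
    by_contra hcon
    push_neg at hcon
    obtain ⟨hc1, hc2, hc3⟩ := hcon
    obtain ⟨hFflat', hrkF, -, -⟩ := hF
    have hFE : F ⊆ M.E := hFflat'.1
    have hFflat : M.IsFlat F := (isFlat_iff_flat hfin hFE).1 hFflat'
    obtain ⟨a, ha, b, hb, hab⟩ := (Set.one_lt_ncard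
      (hfin.subset ((inter_subset_right (s := A) (t := F)).trans hFE))).1 (by omega)
    obtain ⟨f, hfF, hfA⟩ := not_subset.1 hc2
    have hAFE : A ∪ F ⊆ M.E := union_subset hA hFE
    obtain ⟨g, hgE, hgAF⟩ := exists_of_ssubset (hAFE.ssubset_of_ne hc3)
    have haA : a ∈ A := ha.1
    have haF : a ∈ F := ha.2
    have hbA : b ∈ A := hb.1
    have hbF : b ∈ F := hb.2
    have hgA : g ∉ A := fun h => hgAF (Or.inl h)
    have hgF : g ∉ F := fun h => hgAF (Or.inr h)
    -- the base B₁ = {a, b, g}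
    have hpairind : M.Indep {a, b} := hsimple.indep_pair (hFE haF) (hFE hbF)
    have hpairF : ({a, b} : Set α) ⊆ F :=
      insert_subset haF (singleton_subset_iff.2 hbF)
    have hclpair : M.closure {a, b} ⊆ F := by
      have := M.closure_subset_closure hpairF
      rwa [hFflat.closure] at this
    have hgpair : g ∉ ({a, b} : Set α) := fun h => hgF (hpairF h)
    have hB1ind : M.Indep (insert g {a, b}) :=
      (hpairind.insert_indep_iff_of_notMem hgpair).2 ⟨hgE, fun h => hgF (hclpair h)⟩
    have hB1card : (insert g ({a, b} : Set α)).ncard = 3 := by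
      rw [Set.ncard_insert_of_notMem hgpair (toFinite _), Set.ncard_pair hab]
    have hB1base : M.IsBase (insert g {a, b}) :=
      base_of_indep_ncard hfin hrank hB1ind hB1card
    have hB1N : N₁.IsBase (insert g {a, b}) := by
      rw [hN₁]
      refine ⟨hB1base, ?_⟩
      have hsub : insert g ({a, b} : Set α) ∩ A ⊆ {a, b} := by
        rintro z ⟨hz1, hz2⟩
        rcases hz1 with rfl | hz1
        · exact absurd hz2 hgA
        · exact hz1
      have := Set.ncard_le_ncard hsub (toFinite _)
      rw [Set.ncard_pair hab] at this
      omega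
    -- the base B₂ = {f, u, v} with u v ∈ A
    have hfE : f ∈ M.E := hFE hfF
    have hXE : insert f A ⊆ M.E := insert_subset hfE hA
    have hrkX : rk M (insert f A) = 3 := le_antisymm
      (by rw [← hrank]; exact rk_mono hfin hXE)
      (by rw [← h2]; exact rk_mono hfin (subset_insert _ _))
    obtain ⟨J, hJ, hfJ⟩ := (hsimple.indep_singleton hfE).subset_isBasis_of_subset
      (singleton_subset_iff.2 (mem_insert _ _)) hXE
    have hfJ' : f ∈ J := hfJ rfl
    have hJcard : J.ncard = 3 := by rw [basis_ncard hfin hJ, hrkX]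
    have hJbase : M.IsBase J := base_of_indep_ncard hfin hrank hJ.indep hJcard
    have hJfin : J.Finite := hfin.subset hJ.indep.subset_ground
    have hJN : N₁.IsBase J := by
      rw [hN₁]
      refine ⟨hJbase, ?_⟩
      have hsub : J ∩ A ⊆ J \ {f} := by
        rintro z ⟨hz1, hz2⟩
        exact ⟨hz1, fun h => hfA ((mem_singleton_iff.1 h) ▸ hz2)⟩
      have h6 := Set.ncard_le_ncard hsub hJfin.diff
      rw [Set.ncard_diff_singleton_of_mem hfJ', hJcard] at h6
      omega
    have hgJ : g ∉ J := by
      intro h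
      rcases hJ.subset h with h' | h'
      · exact hgF (h' ▸ hfF)
      · exact hgA h'
    obtain ⟨y, hy, hybase⟩ := hB1N.exchange hJN ⟨mem_insert _ _, hgJ⟩
    rw [Set.insert_diff_self_of_notMem hgpair] at hybase
    rw [hN₁] at hybase
    obtain ⟨hyMbase, hycard⟩ := hybase
    have hypair : y ∉ ({a, b} : Set α) := fun h => hy.2 (mem_insert_of_mem _ h)
    have hycard3 : (insert y ({a, b} : Set α)).ncard = 3 := by
      rw [Set.ncard_insert_of_notMem hypair (toFinite _), Set.ncard_pair hab]
    rcases hJ.subset hy.1 with rfl | hyA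
    · -- y = f : {f, a, b} ⊆ F dependent
      have hsubF : insert y ({a, b} : Set α) ⊆ F := insert_subset hfF hpairF
      have := le_rk hfin hyMbase.indep hsubF
      rw [hycard3, hrkF] at this
      omega
    · -- y ∈ A : base inside A
      have hsubA : insert y ({a, b} : Set α) ⊆ A :=
        insert_subset hyA (insert_subset haA (singleton_subset_iff.2 hbA))
      rw [inter_eq_self_of_subset_left hsubA, hycard3] at hycard
      omega
  · rintro ⟨h1, h2, h3⟩
    have hstar : ∀ L, M.IsFlat L → rk M L = 2 → 3 ≤ L.ncard →
        (A ∩ L).ncard ≤ 1 ∨ L ⊆ A ∨ A ∪ L = M.E := fun L hL hrk2 hcard =>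
      h3 L (facetFlat2_of_line hfin hsimple hrank hL hrk2 hcard)
    obtain ⟨N₁, hN₁E, hN₁⟩ := exists_N1 hfin hsimple hrank hA h1 hstar
    obtain ⟨N₂, hN₂E, hN₂⟩ := exists_N2 hfin hsimple hrank hA h2 hstar
    refine ⟨⟨N₁, hN₁E, hN₁⟩, ⟨N₂, hN₂E, hN₂⟩, ?_, ?_⟩
    · obtain ⟨I, hIi, hIA, hIcard⟩ := exists_rk hfin A
      rw [h2] at hIcard
      refine ⟨I, base_of_indep_ncard hfin hrank hIi hIcard, ?_⟩
      rw [inter_eq_self_of_subset_left hIA, hIcard]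
      omega
    · obtain ⟨g, hg, h, hh, hgh⟩ := (Set.one_lt_ncard (hfin.subset (diff_subset (s := M.E) (t := A)))).1
        (by omega)
      have hpair : M.Indep {g, h} := hsimple.indep_pair hg.1 hh.1
      obtain ⟨B, hB, hsub⟩ := hpair.exists_isBase_superset
      refine ⟨B, hB, ?_⟩
      have hBfin : B.Finite := hfin.subset hB.indep.subset_ground
      have hBc := base_ncard hfin hrank hB
      have hs1 : B ∩ A ⊆ B \ {g, h} := by
        rintro z ⟨hz1, hz2⟩
        refine ⟨hz1, ?_⟩
        rintro (rfl | hzh)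
        · exact hg.2 hz2
        · rw [mem_singleton_iff] at hzh
          exact hh.2 (hzh ▸ hz2)
      have hs2 := Set.ncard_le_ncard hs1 hBfin.diff
      have hs3 : (B \ {g, h}).ncard = 1 := by
        rw [Set.ncard_diff hsub (toFinite _), Set.ncard_pair hgh, hBc]
      omega

end PaperWMO
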